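/- (Padberg–Rinaldi computation of β(U)) Let U ⊆ V be fixed and let F₀ := {e ∈ δ(U) : c'_e < c_e}. If |T ∩ U| + |F₀| is odd, then β(U) := min{β(U,F) : F ⊆ δ(U), |T∩U|+|F| odd} equals β(U, F₀) = ∑_{e∈δ(U)} min(c_e, c'_e). If |T ∩ U| + |F₀| is even and δ(U) ≠ ∅, then β(U) = ∑_{e∈δ(U)} min(c_e, c'_e) + min_{f∈δ(U)} |c_f − c'_f|, attained at the symmetric difference F₀ Δ {f} for f minimizing |c_f − c'_f| over δ(U). -/

import Mathlib

open scoped Classical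

/-- The set of edges of `E` with exactly one endpoint in `U`. -/
noncomputable def cutEdges {V : Type*} [Fintype V] [DecidableEq V]
    (E : Finset (V × V)) (U : Finset V) : Finset (V × V) :=
  E.filter (fun e => (e.1 ∈ U ∧ e.2 ∉ U) ∨ (e.1 ∉ U ∧ e.2 ∈ U))

private def prPen {α : Type*} [DecidableEq α] (c c' : α → ℚ) (F : Finset α) (e : α) : ℚ :=
  if e ∈ F then max (c' e - c e) 0 else max (c e - c' e) 0

private lemma prPen_nonneg {α : Type*} [DecidableEq α] (c c' : α → ℚ) (F : Finset α) (e : α) :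
    0 ≤ prPen c c' F e := by
  unfold prPen; split <;> exact le_max_right _ _

private lemma prKey {α : Type*} [DecidableEq α] (c c' : α → ℚ) {D F : Finset α} (hF : F ⊆ D) :
    (D \ F).sum c + F.sum c' =
      D.sum (fun e => min (c e) (c' e)) + D.sum (prPen c c' F) := by
  rw [← Finset.sum_sdiff hF (f := fun e => min (c e) (c' e)),
      ← Finset.sum_sdiff hF (f := prPen c c' F)]
  have h1 : (D \ F).sum c
      = (D \ F).sum (fun e => min (c e) (c' e)) + (D \ F).sum (prPen c c' F) := by
    rw [← Finset.sum_add_distrib]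
    refine Finset.sum_congr rfl fun e he => ?_
    have hne : e ∉ F := (Finset.mem_sdiff.mp he).2
    simp only [prPen, if_neg hne]
    rcases le_total (c e) (c' e) with h | h
    · rw [min_eq_left h, max_eq_right (by linarith)]; ring
    · rw [min_eq_right h, max_eq_left (by linarith)]; ring
  have h2 : F.sum c' = F.sum (fun e => min (c e) (c' e)) + F.sum (prPen c c' F) := by
    rw [← Finset.sum_add_distrib]
    refine Finset.sum_congr rfl fun e he => ?_
    simp only [prPen, if_pos he]
    rcases le_total (c e) (c' e) with h | h
    · rw [min_eq_left h, max_eq_left (by linarith)]; ring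
    · rw [min_eq_right h, max_eq_right (by linarith)]; ring
  rw [h1, h2]; ring

theorem stmt_6 {V : Type*} [Fintype V] [DecidableEq V]
    (E : Finset (V × V)) (c c' : V × V → ℚ)
    (hc : ∀ e, 0 ≤ c e) (hc' : ∀ e, 0 ≤ c' e) (T U : Finset V) :
    (Odd ((T ∩ U).card + ((cutEdges E U).filter (fun e => c' e < c e)).card) →
      ((cutEdges E U \ (cutEdges E U).filter (fun e => c' e < c e)).sum c +
          ((cutEdges E U).filter (fun e => c' e < c e)).sum c' =
        (cutEdges E U).sum (fun e => min (c e) (c' e))) ∧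
      ∀ F ⊆ cutEdges E U, Odd ((T ∩ U).card + F.card) →
        (cutEdges E U \ (cutEdges E U).filter (fun e => c' e < c e)).sum c +
            ((cutEdges E U).filter (fun e => c' e < c e)).sum c' ≤
          (cutEdges E U \ F).sum c + F.sum c') ∧
    (¬ Odd ((T ∩ U).card + ((cutEdges E U).filter (fun e => c' e < c e)).card) →
      (cutEdges E U).Nonempty →
      ∃ f ∈ cutEdges E U, (∀ g ∈ cutEdges E U, |c f - c' f| ≤ |c g - c' g|) ∧
        Odd ((T ∩ U).card + (symmDiff ((cutEdges E U).filter (fun e => c' e < c e)) {f}).card) ∧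
        ((cutEdges E U \ symmDiff ((cutEdges E U).filter (fun e => c' e < c e)) {f}).sum c +
            (symmDiff ((cutEdges E U).filter (fun e => c' e < c e)) {f}).sum c' =
          (cutEdges E U).sum (fun e => min (c e) (c' e)) + |c f - c' f|) ∧
        ∀ F ⊆ cutEdges E U, Odd ((T ∩ U).card + F.card) →
          (cutEdges E U \ symmDiff ((cutEdges E U).filter (fun e => c' e < c e)) {f}).sum c +
              (symmDiff ((cutEdges E U).filter (fun e => c' e < c e)) {f}).sum c' ≤
            (cutEdges E U \ F).sum c + F.sum c') := by
  set D := cutEdges E U with hD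
  set F₀ := D.filter (fun e => c' e < c e) with hF₀def
  have hF₀sub : F₀ ⊆ D := Finset.filter_subset _ _
  have hpen0 : D.sum (prPen c c' F₀) = 0 := by
    refine Finset.sum_eq_zero fun e he => ?_
    by_cases h : c' e < c e
    · have : e ∈ F₀ := Finset.mem_filter.mpr ⟨he, h⟩
      simp only [prPen, if_pos this]
      rw [max_eq_right (by linarith)]
    · have hnot : e ∉ F₀ := fun hmem => h (Finset.mem_filter.mp hmem).2
      simp only [prPen, if_neg hnot]
      rw [max_eq_right (by push_neg at h; linarith)]
  have hβF₀ : (D \ F₀).sum c + F₀.sum c' = D.sum (fun e => min (c e) (c' e)) := by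
    rw [prKey c c' hF₀sub, hpen0, add_zero]
  -- membership characterization in F₀
  have hmemF₀ : ∀ e ∈ D, (e ∈ F₀ ↔ c' e < c e) := fun e he =>
    ⟨fun h => (Finset.mem_filter.mp h).2, fun h => Finset.mem_filter.mpr ⟨he, h⟩⟩
  refine ⟨fun _ => ⟨hβF₀, ?_⟩, ?_⟩
  · intro F hF _
    rw [hβF₀, prKey c c' hF]
    have : 0 ≤ D.sum (prPen c c' F) :=
      Finset.sum_nonneg fun e _ => prPen_nonneg c c' F e
    linarith
  · intro hpar hne
    obtain ⟨f, hfD, hfmin⟩ := D.exists_min_image (fun e => |c e - c' e|) hne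
    refine ⟨f, hfD, hfmin, ?_⟩
    set F₁ := symmDiff F₀ {f} with hF₁def
    have hmem1 : ∀ e, e ∈ F₁ ↔ (e ∈ F₀ ∧ e ≠ f) ∨ (e = f ∧ e ∉ F₀) := by
      intro e
      simp [hF₁def, Finset.mem_symmDiff, and_comm]
    have hF₁sub : F₁ ⊆ D := by
      intro e he
      rcases (hmem1 e).mp he with ⟨h1, _⟩ | ⟨h1, _⟩
      · exact hF₀sub h1
      · exact h1 ▸ hfD
    have hcard : F₁.card = if f ∈ F₀ then F₀.card - 1 else F₀.card + 1 := by
      by_cases hf : f ∈ F₀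
      · rw [if_pos hf]
        have : F₁ = F₀.erase f := by
          ext e
          rw [hmem1, Finset.mem_erase]
          constructor
          · rintro (⟨h1, h2⟩ | ⟨rfl, h2⟩)
            · exact ⟨h2, h1⟩
            · exact absurd hf h2
          · rintro ⟨h1, h2⟩; exact Or.inl ⟨h2, h1⟩
        rw [this, Finset.card_erase_of_mem hf]
      · rw [if_neg hf]
        have : F₁ = insert f F₀ := by
          ext e
          rw [hmem1, Finset.mem_insert]
          constructor
          · rintro (⟨h1, _⟩ | ⟨rfl, _⟩)
            · exact Or.inr h1
            · exact Or.inl rfl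
          · rintro (rfl | h1)
            · exact Or.inr ⟨rfl, hf⟩
            · exact Or.inl ⟨h1, fun h => hf (h ▸ h1)⟩
        rw [this, Finset.card_insert_of_notMem hf]
    have hodd1 : Odd ((T ∩ U).card + F₁.card) := by
      rw [hcard]
      by_cases hf : f ∈ F₀
      · rw [if_pos hf]
        have hpos : 1 ≤ F₀.card := Finset.card_pos.mpr ⟨f, hf⟩
        simp only [Nat.odd_iff] at hpar ⊢
        omega
      · rw [if_neg hf]
        simp only [Nat.odd_iff] at hpar ⊢
        omega
    -- penalty sum for F₁
    have hpen1 : D.sum (prPen c c' F₁) = |c f - c' f| := by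
      rw [Finset.sum_eq_single_of_mem f hfD]
      · by_cases hf : f ∈ F₀
        · have hf1 : f ∉ F₁ := by
            rw [hmem1]; rintro (⟨_, h⟩ | ⟨_, h⟩) <;> simp_all
          have hlt : c' f < c f := (hmemF₀ f hfD).mp hf
          simp only [prPen, if_neg hf1]
          rw [max_eq_left (by linarith), abs_of_pos (by linarith)]
        · have hf1 : f ∈ F₁ := (hmem1 f).mpr (Or.inr ⟨rfl, hf⟩)
          have hle : c f ≤ c' f := by
            have := (hmemF₀ f hfD).not.mp hf; push_neg at this; exact this
          simp only [prPen, if_pos hf1]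
          rw [max_eq_left (by linarith), abs_of_nonpos (by linarith)]
          ring
      · intro g hgD hgf
        have : g ∈ F₁ ↔ g ∈ F₀ := by
          rw [hmem1]
          constructor
          · rintro (⟨h1, _⟩ | ⟨rfl, _⟩)
            · exact h1
            · exact absurd rfl hgf
          · intro h1; exact Or.inl ⟨h1, hgf⟩
        by_cases h : c' g < c g
        · have : g ∈ F₁ := this.mpr ((hmemF₀ g hgD).mpr h)
          simp only [prPen, if_pos this]
          rw [max_eq_right (by linarith)]
        · have hnot : g ∉ F₁ := fun hm => h ((hmemF₀ g hgD).mp (this.mp hm))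
          simp only [prPen, if_neg hnot]
          push_neg at h
          rw [max_eq_right (by linarith)]
    refine ⟨hodd1, by rw [prKey c c' hF₁sub, hpen1], ?_⟩
    intro F hF hodd
    rw [prKey c c' hF₁sub, prKey c c' hF, hpen1]
    refine (add_le_add_iff_left _).mpr ?_
    -- F ≠ F₀
    have hFne : F ≠ F₀ := by
      intro h; rw [h] at hodd; exact hpar hodd
    obtain ⟨g, hg⟩ : ∃ g, ¬(g ∈ F ↔ g ∈ F₀) := by
      by_contra h
      push_neg at h
      exact hFne (Finset.ext fun a => h a)
    have hgD : g ∈ D := by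
      by_cases hgF : g ∈ F
      · exact hF hgF
      · have : g ∈ F₀ := by tauto
        exact hF₀sub this
    have hpengF : prPen c c' F g = |c g - c' g| := by
      by_cases hgF : g ∈ F
      · have hg0 : g ∉ F₀ := by tauto
        have hle : c g ≤ c' g := by
          have := (hmemF₀ g hgD).not.mp hg0; push_neg at this; exact this
        simp only [prPen, if_pos hgF]
        rw [max_eq_left (by linarith), abs_of_nonpos (by linarith)]
        ring
      · have hg0 : g ∈ F₀ := by tauto
        have hlt : c' g < c g := (hmemF₀ g hgD).mp hg0
        simp only [prPen, if_neg hgF]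
        rw [max_eq_left (by linarith), abs_of_pos (by linarith)]
    calc |c f - c' f| ≤ |c g - c' g| := hfmin g hgD
      _ = prPen c c' F g := hpengF.symm
      _ ≤ D.sum (prPen c c' F) :=
          Finset.single_le_sum (fun i _ => prPen_nonneg c c' F i) hgD
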